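/- Let θ be a nonempty shifted skew diagram that is a row or a column, and let p ≥ 1 be an integer. If θ contains a diagonal box, then C(θ,p) = δ_{p,|θ|} - δ_{p,|θ|-1} when θ is a column, and C(θ,p) = δ_{p,|θ|} when θ is not a column. If θ contains no diagonal box, then C(θ,p) = 2·δ_{p,|θ|} - δ_{p,|θ|-1}. Here δ denotes the Kronecker delta. -/

import Mathlib

/-- `hcoef a b = Σ_{j=0}^{min(a,b)} (-1)^j 2^{a-j} binom(a,j)`; it is `0` when `b < 0`. -/
def hcoef (a : ℕ) (b : ℤ) : ℤ :=
  ∑ j ∈ Finset.range (a + 1),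
    if (j : ℤ) ≤ b then (-1) ^ j * 2 ^ (a - j) * (a.choose j) else 0

attribute [local instance] Classical.propDecidable

/-- The south-east corners of a finite set of boxes: boxes `(i,j)` such that
neither `(i+1,j)` nor `(i,j+1)` belongs to the set. -/
def seCorners (θ : Finset (ℤ × ℤ)) : Finset (ℤ × ℤ) :=
  θ.filter fun b => (b.1 + 1, b.2) ∉ θ ∧ (b.1, b.2 + 1) ∉ θ

/-- The south-east rim of `θ`: boxes `(i,j) ∈ θ` such that no box `(i',j') ∈ θ`
has `i' > i` and `j' > j`. -/
def seRim (θ : Finset (ℤ × ℤ)) : Finset (ℤ × ℤ) :=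
  θ.filter fun b => ∀ b' ∈ θ, ¬ (b.1 < b'.1 ∧ b.2 < b'.2)

/-- `d(θ)`: the number of boxes in the south-east rim of `θ`. -/
def dRim (θ : Finset (ℤ × ℤ)) : ℕ := (seRim θ).card

/-- `θ` is a rim if it equals its own south-east rim. -/
def IsRim (θ : Finset (ℤ × ℤ)) : Prop := θ = seRim θ

/-- Two boxes are adjacent (connected) if they share a side. -/
def Adjacent (b b' : ℤ × ℤ) : Prop := |b.1 - b'.1| + |b.2 - b'.2| = 1

/-- `b'` can be reached from `b` by a chain of adjacent boxes of `θ`. -/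
def Reach (θ : Finset (ℤ × ℤ)) (b b' : ℤ × ℤ) : Prop :=
  Relation.ReflTransGen (fun x y => y ∈ θ ∧ Adjacent x y) b b'

/-- The connected components of `θ`. -/
noncomputable def comps (θ : Finset (ℤ × ℤ)) : Finset (Finset (ℤ × ℤ)) :=
  θ.image fun b => θ.filter fun b' => Reach θ b b'

/-- `N(θ)`: the number of connected components of `θ`. -/
noncomputable def Ncomp (θ : Finset (ℤ × ℤ)) : ℕ := (comps θ).card

/-- `N⁻(θ) = max(N(θ) - 1, 0)`. -/
noncomputable def Nminus (θ : Finset (ℤ × ℤ)) : ℕ := Ncomp θ - 1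

/-- `N'(θ)`: the number of connected components of `θ` containing no diagonal box. -/
noncomputable def Nprime (θ : Finset (ℤ × ℤ)) : ℕ :=
  ((comps θ).filter fun c => ∀ b ∈ c, b.1 ≠ b.2).card

/-- `B(θ,p) = Σ_S (-1)^{|S|} h(N⁻(θ∖S), d(θ∖S) - p)`, the sum over subsets `S`
of the set of south-east corners of `θ`. -/
noncomputable def Bcoef (θ : Finset (ℤ × ℤ)) (p : ℤ) : ℤ :=
  ∑ S ∈ (seCorners θ).powerset,
    (-1) ^ S.card * hcoef (Nminus (θ \ S)) ((dRim (θ \ S) : ℤ) - p)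

/-- `C(θ,p) = Σ_S (-1)^{|S|} h(N'(θ∖S), d(θ∖S) - p)`, the sum over subsets `S`
of the set of south-east corners of `θ`. -/
noncomputable def Ccoef (θ : Finset (ℤ × ℤ)) (p : ℤ) : ℤ :=
  ∑ S ∈ (seCorners θ).powerset,
    (-1) ^ S.card * hcoef (Nprime (θ \ S)) ((dRim (θ \ S) : ℤ) - p)

/-- A strict partition with largest part at most `n`, encoded as a function
with `lam i = 0` for `i` beyond the length. -/
def IsStrictPartition (n : ℕ) (lam : ℤ → ℤ) : Prop :=
  lam 1 ≤ (n : ℤ) ∧ (∀ i : ℤ, 1 ≤ i → 0 ≤ lam i) ∧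
  (∀ i : ℤ, 1 ≤ i → lam (i + 1) = 0 ∨ lam (i + 1) < lam i)

/-- The shifted Young diagram `{(i,j) : 1 ≤ i ≤ ℓ, i ≤ j ≤ λ_i + i - 1}` of a
strict partition. -/
noncomputable def shiftedD (n : ℕ) (lam : ℤ → ℤ) : Finset (ℤ × ℤ) :=
  (Finset.Icc (1 : ℤ) (n : ℤ) ×ˢ Finset.Icc (1 : ℤ) (2 * (n : ℤ))).filter
    fun b => b.1 ≤ b.2 ∧ b.2 ≤ lam b.1 + b.1 - 1

/-- `θ` is a shifted skew diagram: `θ = ν/λ` for strict partitions `λ ⊆ ν`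
with `ν_1 ≤ n`. -/
def IsShiftedSkewDiagram (n : ℕ) (θ : Finset (ℤ × ℤ)) : Prop :=
  ∃ lam nu : ℤ → ℤ, IsStrictPartition n lam ∧ IsStrictPartition n nu ∧
    (∀ i : ℤ, 1 ≤ i → lam i ≤ nu i) ∧ θ = shiftedD n nu \ shiftedD n lam

/-- All boxes of `φ` lie in a single column. -/
def IsCol (φ : Finset (ℤ × ℤ)) : Prop := ∃ j : ℤ, ∀ b ∈ φ, b.2 = j

/-- Kronecker delta on integers. -/
def kdelta (x y : ℤ) : ℤ := if x = y then 1 else 0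

/-! ### Auxiliary development -/

open Finset

/-- A row segment. -/
noncomputable def RowF (i a b : ℤ) : Finset (ℤ × ℤ) := {i} ×ˢ Finset.Icc a b

/-- A column segment. -/
noncomputable def ColF (j a b : ℤ) : Finset (ℤ × ℤ) := Finset.Icc a b ×ˢ {j}

@[simp] lemma mem_RowF {i a b : ℤ} {x : ℤ × ℤ} :
    x ∈ RowF i a b ↔ x.1 = i ∧ a ≤ x.2 ∧ x.2 ≤ b := by
  rw [RowF, Finset.mem_product, Finset.mem_singleton, Finset.mem_Icc]

@[simp] lemma mem_ColF {j a b : ℤ} {x : ℤ × ℤ} :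
    x ∈ ColF j a b ↔ a ≤ x.1 ∧ x.1 ≤ b ∧ x.2 = j := by
  rw [ColF, Finset.mem_product, Finset.mem_singleton, Finset.mem_Icc, and_assoc]

lemma card_RowF (i a b : ℤ) : (RowF i a b).card = (b + 1 - a).toNat := by
  simp [RowF, Int.card_Icc]

lemma card_ColF (j a b : ℤ) : (ColF j a b).card = (b + 1 - a).toNat := by
  simp [ColF, Int.card_Icc]

lemma seCorners_RowF {i a b : ℤ} (hab : a ≤ b) :
    seCorners (RowF i a b) = {(i, b)} := by
  ext ⟨x, y⟩
  simp only [seCorners, Finset.mem_filter, mem_RowF, Finset.mem_singleton, Prod.mk.injEq]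
  omega

lemma seCorners_ColF {j a b : ℤ} (hab : a ≤ b) :
    seCorners (ColF j a b) = {(b, j)} := by
  ext ⟨x, y⟩
  simp only [seCorners, Finset.mem_filter, mem_ColF, Finset.mem_singleton, Prod.mk.injEq]
  omega

lemma sdiff_RowF (i a b : ℤ) :
    RowF i a b \ ({(i, b)} : Finset (ℤ × ℤ)) = RowF i a (b - 1) := by
  ext ⟨x, y⟩
  simp only [Finset.mem_sdiff, mem_RowF, Finset.mem_singleton, Prod.mk.injEq]
  omega

lemma sdiff_ColF (j a b : ℤ) :
    ColF j a b \ ({(b, j)} : Finset (ℤ × ℤ)) = ColF j a (b - 1) := by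
  ext ⟨x, y⟩
  simp only [Finset.mem_sdiff, mem_ColF, Finset.mem_singleton, Prod.mk.injEq]
  omega

lemma seRim_RowF (i a b : ℤ) : seRim (RowF i a b) = RowF i a b := by
  unfold seRim
  apply Finset.filter_true_of_mem
  rintro ⟨x, y⟩ hx ⟨x', y'⟩ hx'
  simp only [mem_RowF] at hx hx'
  omega

lemma seRim_ColF (j a b : ℤ) : seRim (ColF j a b) = ColF j a b := by
  unfold seRim
  apply Finset.filter_true_of_mem
  rintro ⟨x, y⟩ hx ⟨x', y'⟩ hx'
  simp only [mem_ColF] at hx hx'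
  omega

lemma dRim_RowF (i a b : ℤ) : dRim (RowF i a b) = (b + 1 - a).toNat := by
  rw [dRim, seRim_RowF, card_RowF]

lemma dRim_ColF (j a b : ℤ) : dRim (ColF j a b) = (b + 1 - a).toNat := by
  rw [dRim, seRim_ColF, card_ColF]

lemma adj_row (i x : ℤ) : Adjacent (i, x) (i, x + 1) := by
  simp [Adjacent]

lemma adj_row' (i x : ℤ) : Adjacent (i, x + 1) (i, x) := by
  simp [Adjacent]

lemma adj_col (j x : ℤ) : Adjacent (x, j) (x + 1, j) := by
  simp [Adjacent]

lemma adj_col' (j x : ℤ) : Adjacent (x + 1, j) (x, j) := by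
  simp [Adjacent]

lemma reach_RowF {i a b : ℤ} {x y : ℤ} (hx1 : a ≤ x) (hx2 : x ≤ b)
    (hy1 : a ≤ y) (hy2 : y ≤ b) : Reach (RowF i a b) (i, x) (i, y) := by
  have down : ∀ z : ℤ, a ≤ z → z ≤ b → Reach (RowF i a b) (i, z) (i, a) := by
    refine Int.le_induction ?_ ?_
    · intro _; exact Relation.ReflTransGen.refl
    · intro z hz ih hzb
      exact Relation.ReflTransGen.head ⟨by simp; omega, adj_row' i z⟩ (ih (by omega))
  have up : ∀ z : ℤ, a ≤ z → z ≤ b → Reach (RowF i a b) (i, a) (i, z) := by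
    refine Int.le_induction ?_ ?_
    · intro _; exact Relation.ReflTransGen.refl
    · intro z hz ih hzb
      exact Relation.ReflTransGen.tail (ih (by omega)) ⟨by simp; omega, adj_row i z⟩
  exact Relation.ReflTransGen.trans (down x hx1 hx2) (up y hy1 hy2)

lemma reach_ColF {j a b : ℤ} {x y : ℤ} (hx1 : a ≤ x) (hx2 : x ≤ b)
    (hy1 : a ≤ y) (hy2 : y ≤ b) : Reach (ColF j a b) (x, j) (y, j) := by
  have down : ∀ z : ℤ, a ≤ z → z ≤ b → Reach (ColF j a b) (z, j) (a, j) := by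
    refine Int.le_induction ?_ ?_
    · intro _; exact Relation.ReflTransGen.refl
    · intro z hz ih hzb
      exact Relation.ReflTransGen.head ⟨by simp; omega, adj_col' j z⟩ (ih (by omega))
  have up : ∀ z : ℤ, a ≤ z → z ≤ b → Reach (ColF j a b) (a, j) (z, j) := by
    refine Int.le_induction ?_ ?_
    · intro _; exact Relation.ReflTransGen.refl
    · intro z hz ih hzb
      exact Relation.ReflTransGen.tail (ih (by omega)) ⟨by simp; omega, adj_col j z⟩
  exact Relation.ReflTransGen.trans (down x hx1 hx2) (up y hy1 hy2)

lemma comps_RowF {i a b : ℤ} (hab : a ≤ b) : comps (RowF i a b) = {RowF i a b} := by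
  unfold comps
  have h1 : ∀ c ∈ RowF i a b,
      ((RowF i a b).filter fun b' => Reach (RowF i a b) c b') = RowF i a b := by
    rintro ⟨x, y⟩ hc
    apply Finset.filter_true_of_mem
    rintro ⟨x', y'⟩ hc'
    simp only [mem_RowF] at hc hc'
    obtain ⟨rfl, h1, h2⟩ := hc
    obtain ⟨rfl, h1', h2'⟩ := hc'
    exact reach_RowF h1 h2 h1' h2'
  rw [Finset.image_congr fun c hc => h1 c hc]
  exact Finset.image_const ⟨(i, a), by simp [hab]⟩ _

lemma comps_ColF {j a b : ℤ} (hab : a ≤ b) : comps (ColF j a b) = {ColF j a b} := by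
  unfold comps
  have h1 : ∀ c ∈ ColF j a b,
      ((ColF j a b).filter fun b' => Reach (ColF j a b) c b') = ColF j a b := by
    rintro ⟨x, y⟩ hc
    apply Finset.filter_true_of_mem
    rintro ⟨x', y'⟩ hc'
    simp only [mem_ColF] at hc hc'
    obtain ⟨h1, h2, rfl⟩ := hc
    obtain ⟨h1', h2', rfl⟩ := hc'
    exact reach_ColF h1 h2 h1' h2'
  rw [Finset.image_congr fun c hc => h1 c hc]
  exact Finset.image_const ⟨(a, j), by simp [hab]⟩ _

lemma Nprime_RowF {i a b : ℤ} (hab : a ≤ b) :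
    Nprime (RowF i a b) = if a ≤ i ∧ i ≤ b then 0 else 1 := by
  unfold Nprime
  rw [comps_RowF hab, Finset.filter_singleton]
  by_cases h : a ≤ i ∧ i ≤ b
  · rw [if_pos h, if_neg, Finset.card_empty]
    push_neg
    exact ⟨(i, i), by simp [h.1, h.2], rfl⟩
  · rw [if_neg h, if_pos, Finset.card_singleton]
    rintro ⟨x, y⟩ hxy
    simp only [mem_RowF] at hxy
    simp only [ne_eq]
    omega

lemma Nprime_ColF {j a b : ℤ} (hab : a ≤ b) :
    Nprime (ColF j a b) = if a ≤ j ∧ j ≤ b then 0 else 1 := by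
  unfold Nprime
  rw [comps_ColF hab, Finset.filter_singleton]
  by_cases h : a ≤ j ∧ j ≤ b
  · rw [if_pos h, if_neg, Finset.card_empty]
    push_neg
    exact ⟨(j, j), by simp [h.1, h.2], rfl⟩
  · rw [if_neg h, if_pos, Finset.card_singleton]
    rintro ⟨x, y⟩ hxy
    simp only [mem_ColF] at hxy
    simp only [ne_eq]
    omega

@[simp] lemma Nprime_empty : Nprime (∅ : Finset (ℤ × ℤ)) = 0 := by
  simp [Nprime, comps]

@[simp] lemma dRim_empty : dRim (∅ : Finset (ℤ × ℤ)) = 0 := by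
  simp [dRim, seRim]

lemma RowF_empty {i a b : ℤ} (h : b < a) : RowF i a b = ∅ := by
  ext ⟨x, y⟩; simp only [mem_RowF, Finset.notMem_empty, iff_false]; omega

lemma ColF_empty {j a b : ℤ} (h : b < a) : ColF j a b = ∅ := by
  ext ⟨x, y⟩; simp only [mem_ColF, Finset.notMem_empty, iff_false]; omega

lemma hcoef_zero (b : ℤ) : hcoef 0 b = if 0 ≤ b then 1 else 0 := by
  simp [hcoef]

lemma hcoef_one (b : ℤ) :
    hcoef 1 b = (if 0 ≤ b then 2 else 0) + (if 1 ≤ b then -1 else 0) := by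
  rw [hcoef]
  rw [Finset.sum_range_succ, Finset.sum_range_one]
  norm_num

lemma Ccoef_corner {θ : Finset (ℤ × ℤ)} {c : ℤ × ℤ} (hc : seCorners θ = {c}) (p : ℤ) :
    Ccoef θ p = hcoef (Nprime θ) ((dRim θ : ℤ) - p)
      - hcoef (Nprime (θ \ {c})) ((dRim (θ \ {c}) : ℤ) - p) := by
  have hps : ({c} : Finset (ℤ × ℤ)).powerset = {∅, {c}} := by
    ext S
    simp [Finset.mem_powerset, Finset.subset_singleton_iff, Finset.mem_insert]
  rw [Ccoef, hc, hps, Finset.sum_pair (Finset.singleton_ne_empty c).symm]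
  simp [sub_eq_add_neg]

/-- Ccoef of a row segment. -/
lemma Ccoef_RowF {i a b : ℤ} (hab : a ≤ b) {p : ℤ} (hp : 1 ≤ p) :
    Ccoef (RowF i a b) p =
      if a ≤ i ∧ i ≤ b then
        (if i = b then kdelta p (b + 1 - a) - kdelta p (b - a) else kdelta p (b + 1 - a))
      else 2 * kdelta p (b + 1 - a) - kdelta p (b - a) := by
  rw [Ccoef_corner (seCorners_RowF hab) p, sdiff_RowF, Nprime_RowF hab, dRim_RowF]
  have e1 : (((b + 1 - a).toNat : ℤ)) = b + 1 - a := by omega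
  rw [e1]
  by_cases h1 : a ≤ b - 1
  · rw [Nprime_RowF h1, dRim_RowF]
    have e2 : (((b - 1 + 1 - a).toNat : ℤ)) = b - a := by omega
    rw [e2]
    simp only [kdelta]
    split_ifs <;> simp only [hcoef_zero, hcoef_one] <;> split_ifs <;> omega
  · have hb : b - 1 < a := by omega
    rw [RowF_empty hb, Nprime_empty, dRim_empty]
    simp only [kdelta, Nat.cast_zero]
    split_ifs <;> simp only [hcoef_zero, hcoef_one] <;> split_ifs <;> omega

/-- Ccoef of a column segment lying weakly above the diagonal. -/
lemma Ccoef_ColF {j a b : ℤ} (hab : a ≤ b) (hbj : b ≤ j) {p : ℤ} (hp : 1 ≤ p) :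
    Ccoef (ColF j a b) p =
      if b = j then kdelta p (b + 1 - a) - kdelta p (b - a)
      else 2 * kdelta p (b + 1 - a) - kdelta p (b - a) := by
  rw [Ccoef_corner (seCorners_ColF hab) p, sdiff_ColF, Nprime_ColF hab, dRim_ColF]
  have e1 : (((b + 1 - a).toNat : ℤ)) = b + 1 - a := by omega
  rw [e1]
  by_cases h1 : a ≤ b - 1
  · rw [Nprime_ColF h1, dRim_ColF]
    have e2 : (((b - 1 + 1 - a).toNat : ℤ)) = b - a := by omega
    rw [e2]
    simp only [kdelta]
    split_ifs <;> simp only [hcoef_zero, hcoef_one] <;> split_ifs <;> omega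
  · have hb : b - 1 < a := by omega
    rw [ColF_empty hb, Nprime_empty, dRim_empty]
    simp only [kdelta, Nat.cast_zero]
    split_ifs <;> simp only [hcoef_zero, hcoef_one] <;> split_ifs <;> omega

lemma mem_shiftedD {n : ℕ} {mu : ℤ → ℤ} {x y : ℤ} :
    (x, y) ∈ shiftedD n mu ↔
      ((1 ≤ x ∧ x ≤ (n : ℤ)) ∧ (1 ≤ y ∧ y ≤ 2 * (n : ℤ))) ∧
        (x ≤ y ∧ y ≤ mu x + x - 1) := by
  simp [shiftedD, Finset.mem_filter, Finset.mem_product, Finset.mem_Icc]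

lemma shiftedD_col_closed {n : ℕ} {mu : ℤ → ℤ} (hsp : IsStrictPartition n mu)
    {x1 x2 y : ℤ} (h1 : 1 ≤ x1) (h12 : x1 ≤ x2)
    (h : (x2, y) ∈ shiftedD n mu) : (x1, y) ∈ shiftedD n mu := by
  have key : ∀ z : ℤ, x1 ≤ z → ((z, y) ∈ shiftedD n mu → (x1, y) ∈ shiftedD n mu) := by
    refine Int.le_induction ?_ ?_
    · exact id
    · intro z hz ih hmem
      apply ih
      have step := hsp.2.2 z (le_trans h1 hz)
      rw [mem_shiftedD] at hmem ⊢
      omega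
  exact key x2 h12 h

/-- Structure lemma: a nonempty row-or-column shifted skew diagram is a row
segment above the diagonal or a column segment weakly above the diagonal. -/
lemma struct_lemma {n : ℕ} {θ : Finset (ℤ × ℤ)} (hθ : IsShiftedSkewDiagram n θ)
    (hne : θ.Nonempty)
    (hrowcol : (∃ i : ℤ, ∀ b ∈ θ, b.1 = i) ∨ IsCol θ) :
    (∃ i a b : ℤ, i ≤ a ∧ a ≤ b ∧ θ = RowF i a b) ∨
      (∃ j a b : ℤ, a ≤ b ∧ b ≤ j ∧ θ = ColF j a b) := by
  obtain ⟨lam, nu, hlam, hnu, hle, heq⟩ := hθ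
  have hmem : ∀ q : ℤ × ℤ, q ∈ θ ↔ (q ∈ shiftedD n nu ∧ q ∉ shiftedD n lam) := by
    intro q; rw [heq, Finset.mem_sdiff]
  rcases hrowcol with ⟨i, hrow⟩ | ⟨j, hcol⟩
  · left
    have hTne : (θ.image Prod.snd).Nonempty := hne.image _
    set a := (θ.image Prod.snd).min' hTne with ha
    set b := (θ.image Prod.snd).max' hTne with hb
    have hamem : (i, a) ∈ θ := by
      obtain ⟨q, hq, hq2⟩ := Finset.mem_image.1 ((θ.image Prod.snd).min'_mem hTne)
      have hqe : q = (i, a) := Prod.ext (hrow q hq) hq2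
      rwa [hqe] at hq
    have hbmem : (i, b) ∈ θ := by
      obtain ⟨q, hq, hq2⟩ := Finset.mem_image.1 ((θ.image Prod.snd).max'_mem hTne)
      have hqe : q = (i, b) := Prod.ext (hrow q hq) hq2
      rwa [hqe] at hq
    have hia : i ≤ a := by
      have h := ((hmem (i, a)).1 hamem).1
      rw [mem_shiftedD] at h; omega
    refine ⟨i, a, b, hia,
      Finset.min'_le _ _ (Finset.mem_image_of_mem _ hbmem), ?_⟩
    ext ⟨x, y⟩
    simp only [mem_RowF]
    constructor
    · intro hxy
      exact ⟨hrow _ hxy, Finset.min'_le _ _ (Finset.mem_image_of_mem _ hxy),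
        Finset.le_max' (θ.image Prod.snd) y (Finset.mem_image_of_mem Prod.snd hxy)⟩
    · rintro ⟨rfl, hy1, hy2⟩
      rw [hmem]
      have hA := (hmem (x, a)).1 hamem
      have hB := (hmem (x, b)).1 hbmem
      have hlei := hle x (by
        have h := hA.1
        rw [mem_shiftedD] at h; omega)
      simp only [mem_shiftedD] at hA hB ⊢
      omega
  · right
    have hTne : (θ.image Prod.fst).Nonempty := hne.image _
    set a := (θ.image Prod.fst).min' hTne with ha
    set b := (θ.image Prod.fst).max' hTne with hb
    have hamem : (a, j) ∈ θ := by
      obtain ⟨q, hq, hq2⟩ := Finset.mem_image.1 ((θ.image Prod.fst).min'_mem hTne)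
      have hqe : q = (a, j) := Prod.ext hq2 (hcol q hq)
      rwa [hqe] at hq
    have hbmem : (b, j) ∈ θ := by
      obtain ⟨q, hq, hq2⟩ := Finset.mem_image.1 ((θ.image Prod.fst).max'_mem hTne)
      have hqe : q = (b, j) := Prod.ext hq2 (hcol q hq)
      rwa [hqe] at hq
    have hbj : b ≤ j := by
      have h := ((hmem (b, j)).1 hbmem).1
      rw [mem_shiftedD] at h; omega
    have h1a : 1 ≤ a := by
      have h := ((hmem (a, j)).1 hamem).1
      rw [mem_shiftedD] at h; omega
    refine ⟨j, a, b, Finset.min'_le _ _ (Finset.mem_image_of_mem _ hbmem), hbj, ?_⟩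
    ext ⟨x, y⟩
    simp only [mem_ColF]
    constructor
    · intro hxy
      exact ⟨Finset.min'_le _ _ (Finset.mem_image_of_mem _ hxy),
        Finset.le_max' (θ.image Prod.fst) x (Finset.mem_image_of_mem Prod.fst hxy),
        hcol _ hxy⟩
    · rintro ⟨hx1, hx2, rfl⟩
      rw [hmem]
      constructor
      · exact shiftedD_col_closed hnu (by omega) hx2 ((hmem (b, y)).1 hbmem).1
      · intro hc
        exact ((hmem (a, y)).1 hamem).2 (shiftedD_col_closed hlam h1a hx1 hc)

/-- Let `θ` be a nonempty shifted skew diagram that is a row or a column and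
let `p ≥ 1`.  If `θ` contains a diagonal box, then
`C(θ,p) = δ_{p,|θ|} - δ_{p,|θ|-1}` when `θ` is a column and
`C(θ,p) = δ_{p,|θ|}` when it is not; if `θ` contains no diagonal box, then
`C(θ,p) = 2·δ_{p,|θ|} - δ_{p,|θ|-1}`. -/
theorem Ccoef_of_row_or_col (n : ℕ) (hn : 0 < n) (θ : Finset (ℤ × ℤ))
    (hθ : IsShiftedSkewDiagram n θ) (hne : θ.Nonempty)
    (hrowcol : (∃ i : ℤ, ∀ b ∈ θ, b.1 = i) ∨ IsCol θ)
    (p : ℤ) (hp : 1 ≤ p) :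
    ((∃ b ∈ θ, b.1 = b.2) →
      (IsCol θ → Ccoef θ p = kdelta p (θ.card : ℤ) - kdelta p ((θ.card : ℤ) - 1)) ∧
      (¬ IsCol θ → Ccoef θ p = kdelta p (θ.card : ℤ))) ∧
    ((∀ b ∈ θ, b.1 ≠ b.2) →
      Ccoef θ p = 2 * kdelta p (θ.card : ℤ) - kdelta p ((θ.card : ℤ) - 1)) := by
  obtain h | h := struct_lemma hθ hne hrowcol
  · obtain ⟨i, a, b, hia, hab, rfl⟩ := h
    have hcard : (((RowF i a b).card : ℤ)) = b + 1 - a := by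
      rw [card_RowF]; omega
    rw [hcard]
    have hC := Ccoef_RowF (i := i) hab hp
    constructor
    · intro hdiag
      obtain ⟨⟨x, y⟩, hq, hq2⟩ := hdiag
      simp only [mem_RowF] at hq
      simp only at hq2
      have hai : a = i := by omega
      constructor
      · intro hcolθ
        obtain ⟨j, hj⟩ := hcolθ
        have h1 : a = j := hj (i, a) (by simp [hab])
        have h2 : b = j := hj (i, b) (by simp [hab])
        rw [hC]
        simp only [kdelta]
        split_ifs <;> omega
      · intro hncol
        have hlt : a < b := by
          rcases lt_or_eq_of_le hab with h' | h'
          · exact h'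
          · exact absurd ⟨b, by
              rintro ⟨x', y'⟩ hxy'
              simp only [mem_RowF] at hxy'
              simp only
              omega⟩ hncol
        rw [hC]
        simp only [kdelta]
        split_ifs <;> omega
    · intro hnodiag
      have hlt : i < a := by
        rcases lt_or_eq_of_le hia with h' | h'
        · exact h'
        · exact absurd h' (hnodiag (i, a) (by simp [hab]))
      rw [hC]
      simp only [kdelta]
      split_ifs <;> omega
  · obtain ⟨j, a, b, hab, hbj, rfl⟩ := h
    have hcard : (((ColF j a b).card : ℤ)) = b + 1 - a := by
      rw [card_ColF]; omega
    rw [hcard]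
    have hC := Ccoef_ColF (j := j) hab hbj hp
    constructor
    · intro hdiag
      obtain ⟨⟨x, y⟩, hq, hq2⟩ := hdiag
      simp only [mem_ColF] at hq
      simp only at hq2
      have hbje : b = j := by omega
      constructor
      · intro _
        rw [hC]
        simp only [kdelta]
        split_ifs <;> omega
      · intro hncol
        exact absurd ⟨j, by
          rintro ⟨x', y'⟩ hxy'
          simp only [mem_ColF] at hxy'
          simp only
          omega⟩ hncol
    · intro hnodiag
      have hlt : b < j := by
        rcases lt_or_eq_of_le hbj with h' | h'
        · exact h'
        · exact absurd rfl (hnodiag (j, j) (by simp; omega))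
      rw [hC]
      simp only [kdelta]
      split_ifs <;> omega
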